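/- Let $L/K$ and $M/K$ be finite separable field extensions that form a minimally reducible pair, i.e., $L$ and $M$ are not linearly disjoint over $K$, but for any intermediate fields $K\subseteq L_1\subseteq L$ and $K\subseteq M_1\subseteq M$ with $(L_1,M_1)\ne(L,M)$, the extensions $L_1/K$ and $M_1/K$ are linearly disjoint. Then the Galois closures of $L/K$ and of $M/K$ coincide. -/

import Mathlib

open IntermediateField

/-- Two finite separable extensions `L/K`, `M/K` inside an algebraic closure are linearly
disjoint (in the degree sense) if `[L⊔M : K] = [L:K]·[M:K]`. -/
def LinDisjDeg (K : Type*) [Field K]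
    (L M : IntermediateField K (AlgebraicClosure K)) : Prop :=
  Module.finrank K ↥(L ⊔ M) = Module.finrank K ↥L * Module.finrank K ↥M

open Module

set_option linter.unusedSectionVars false


section GroupAux

variable {G : Type*} [Group G] [Finite G]

lemma relindex_mul_card_inf (H U : Subgroup G) :
    H.relIndex U * Nat.card (H ⊓ U : Subgroup G) = Nat.card U := by
  have h1 : Nat.card (H ⊓ U : Subgroup G) = Nat.card (H.subgroupOf U) := by
    rw [← Subgroup.inf_subgroupOf_right H U]
    exact (Nat.card_congr (Subgroup.subgroupOfEquivOfLe
      (inf_le_right : H ⊓ U ≤ U)).toEquiv).symm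
  rw [Subgroup.relIndex, h1, Subgroup.index_mul_card]

lemma card_sup_mul_card_inf (N U : Subgroup G) [N.Normal] :
    Nat.card (N ⊔ U : Subgroup G) * Nat.card (N ⊓ U : Subgroup G)
      = Nat.card N * Nat.card U := by
  have h2 := relindex_mul_card_inf N (N ⊔ U)
  have h3 := relindex_mul_card_inf N U
  rw [inf_of_le_left (le_sup_left : N ≤ N ⊔ U), sup_comm N U,
    Subgroup.relIndex_sup_right] at h2
  calc Nat.card (N ⊔ U : Subgroup G) * Nat.card (N ⊓ U : Subgroup G)
      = Nat.card (U ⊔ N : Subgroup G) * Nat.card (N ⊓ U : Subgroup G) := by rw [sup_comm]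
    _ = (N.relIndex U * Nat.card N) * Nat.card (N ⊓ U : Subgroup G) := by rw [h2]
    _ = Nat.card N * (N.relIndex U * Nat.card (N ⊓ U : Subgroup G)) := by ring
    _ = Nat.card N * Nat.card U := by rw [h3]

end GroupAux

section GaloisAux

variable {F E : Type*} [Field F] [Field E] [Algebra F E]

lemma fixingSubgroup_sup' (A B : IntermediateField F E) :
    fixingSubgroup (A ⊔ B) = fixingSubgroup A ⊓ fixingSubgroup B := by
  refine le_antisymm (le_inf ?_ ?_) ?_
  · intro σ hσ
    rw [IntermediateField.mem_fixingSubgroup_iff] at hσ ⊢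
    exact fun x hx => hσ x (le_sup_left (a := A) hx)
  · intro σ hσ
    rw [IntermediateField.mem_fixingSubgroup_iff] at hσ ⊢
    exact fun x hx => hσ x (le_sup_right (b := B) hx)
  · rw [← IntermediateField.le_iff_le]
    exact sup_le ((IntermediateField.le_iff_le _ A).2 inf_le_left)
      ((IntermediateField.le_iff_le _ B).2 inf_le_right)

lemma fixedField_sup' (H H' : Subgroup (E ≃ₐ[F] E)) :
    IntermediateField.fixedField (H ⊔ H') =
      IntermediateField.fixedField H ⊓ IntermediateField.fixedField H' := by
  refine le_antisymm (le_inf ?_ ?_) ?_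
  · exact (IntermediateField.le_iff_le H _).2 <|
      le_trans le_sup_left ((IntermediateField.le_iff_le _ _).1 le_rfl)
  · exact (IntermediateField.le_iff_le H' _).2 <|
      le_trans le_sup_right ((IntermediateField.le_iff_le _ _).1 le_rfl)
  · exact (IntermediateField.le_iff_le _ _).2 <| sup_le
      ((IntermediateField.le_iff_le H _).1 inf_le_left)
      ((IntermediateField.le_iff_le H' _).1 inf_le_right)

lemma fixingSubgroup_inf' [FiniteDimensional F E] [IsGalois F E]
    (A B : IntermediateField F E) :
    fixingSubgroup (A ⊓ B) = fixingSubgroup A ⊔ fixingSubgroup B := by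
  have h : A ⊓ B = IntermediateField.fixedField (fixingSubgroup A ⊔ fixingSubgroup B) := by
    rw [fixedField_sup', IsGalois.fixedField_fixingSubgroup, IsGalois.fixedField_fixingSubgroup]
  rw [h, IntermediateField.fixingSubgroup_fixedField]

lemma card_fixingSubgroup' [FiniteDimensional F E] [IsGalois F E]
    (A : IntermediateField F E) :
    Nat.card (fixingSubgroup A) = finrank ↥A E := by
  classical
  exact IsGalois.card_fixingSubgroup_eq_finrank A

/-- Translation lemma: inside a finite Galois extension `E/F`, for `A` normal over `F`,
`[A⊔B : F] · [A⊓B : F] = [A:F]·[B:F]`. -/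
lemma finrank_sup_mul_finrank_inf [FiniteDimensional F E] [IsGalois F E]
    (A B : IntermediateField F E) [Normal F ↥A] :
    finrank F ↥(A ⊔ B) * finrank F ↥(A ⊓ B) = finrank F ↥A * finrank F ↥B := by
  haveI hN : (fixingSubgroup A).Normal := by
    rw [← IntermediateField.restrictNormalHom_ker A]
    exact MonoidHom.normal_ker _
  have grp := card_sup_mul_card_inf (fixingSubgroup A) (fixingSubgroup B)
  rw [← fixingSubgroup_inf', ← fixingSubgroup_sup'] at grp
  rw [card_fixingSubgroup', card_fixingSubgroup', card_fixingSubgroup',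
    card_fixingSubgroup'] at grp
  -- grp : finrank (A⊓B) E * finrank (A⊔B) E = finrank A E * finrank B E
  have t : ∀ C : IntermediateField F E, finrank F ↥C * finrank ↥C E = finrank F E :=
    fun C => Module.finrank_mul_finrank F ↥C E
  have hpos : 0 < finrank ↥(A ⊓ B) E * finrank ↥(A ⊔ B) E :=
    Nat.mul_pos (finrank_pos) (finrank_pos)
  apply Nat.eq_of_mul_eq_mul_right hpos
  calc finrank F ↥(A ⊔ B) * finrank F ↥(A ⊓ B) * (finrank ↥(A ⊓ B) E * finrank ↥(A ⊔ B) E)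
      = (finrank F ↥(A ⊔ B) * finrank ↥(A ⊔ B) E) *
        (finrank F ↥(A ⊓ B) * finrank ↥(A ⊓ B) E) := by ring
    _ = finrank F E * finrank F E := by rw [t, t]
    _ = (finrank F ↥A * finrank ↥A E) * (finrank F ↥B * finrank ↥B E) := by rw [t, t]
    _ = (finrank F ↥A * finrank F ↥B) * (finrank ↥A E * finrank ↥B E) := by ring
    _ = (finrank F ↥A * finrank F ↥B) * (finrank ↥(A ⊓ B) E * finrank ↥(A ⊔ B) E) := by rw [grp]

end GaloisAux

section RestrictAux

variable {K L : Type*} [Field K] [Field L] [Algebra K L]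
variable {N A B : IntermediateField K L}

lemma lift_sup' (X Y : IntermediateField K ↥N) : lift (X ⊔ Y) = lift X ⊔ lift Y :=
  IntermediateField.map_sup X Y N.val

lemma lift_inf' (X Y : IntermediateField K ↥N) : lift (X ⊓ Y) = lift X ⊓ lift Y :=
  IntermediateField.map_inf X Y N.val

lemma restrict_sup' (hA : A ≤ N) (hB : B ≤ N) :
    restrict hA ⊔ restrict hB = restrict (sup_le hA hB) := by
  apply lift_injective N
  rw [lift_sup', lift_restrict, lift_restrict, lift_restrict]

lemma restrict_inf' (hA : A ≤ N) (hB : B ≤ N) :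
    restrict hA ⊓ restrict hB = restrict (le_trans (inf_le_left : A ⊓ B ≤ A) hA) := by
  apply lift_injective N
  rw [lift_inf', lift_restrict, lift_restrict, lift_restrict]

lemma finrank_restrict' (h : A ≤ N) : finrank K ↥(restrict h) = finrank K ↥A :=
  ((restrict_algEquiv h).toLinearEquiv.finrank_eq).symm

lemma finrank_mono_IF (h : A ≤ B) [FiniteDimensional K ↥B] :
    finrank K ↥A ≤ finrank K ↥B :=
  LinearMap.finrank_le_finrank_of_injective
    (f := (IntermediateField.inclusion h).toLinearMap)
    (IntermediateField.inclusion h).injective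

end RestrictAux

section ACAux

variable (K : Type*) [Field K]

lemma sep_normalClosure (A : IntermediateField K (AlgebraicClosure K))
    [Algebra.IsSeparable K ↥A] :
    Algebra.IsSeparable K ↥(normalClosure K ↥A (AlgebraicClosure K)) := by
  haveI : ∀ f : ↥A →ₐ[K] AlgebraicClosure K, Algebra.IsSeparable K ↥f.fieldRange :=
    fun f => Algebra.IsSeparable.of_algHom _ _ (AlgEquiv.ofInjectiveField f).symm.toAlgHom
  rw [normalClosure_def]
  infer_instance

lemma normal_finrank_sup_mul_inf (Ω M : IntermediateField K (AlgebraicClosure K))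
    [FiniteDimensional K ↥Ω] [FiniteDimensional K ↥M]
    [Algebra.IsSeparable K ↥Ω] [Algebra.IsSeparable K ↥M] [Normal K ↥Ω] :
    finrank K ↥(Ω ⊔ M) * finrank K ↥(Ω ⊓ M) = finrank K ↥Ω * finrank K ↥M := by
  set N : IntermediateField K (AlgebraicClosure K) :=
    normalClosure K ↥(Ω ⊔ M) (AlgebraicClosure K) with hNdef
  haveI : FiniteDimensional K ↥N := normalClosure.is_finiteDimensional K ↥(Ω ⊔ M) _
  haveI : Algebra.IsSeparable K ↥N := sep_normalClosure K (Ω ⊔ M)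
  haveI : IsGalois K ↥N := {}
  have hΩ : Ω ≤ N := le_trans le_sup_left (le_normalClosure _)
  have hM : M ≤ N := le_trans le_sup_right (le_normalClosure _)
  haveI : Normal K ↥(restrict hΩ) := Normal.of_algEquiv (restrict_algEquiv hΩ)
  have main := finrank_sup_mul_finrank_inf (restrict hΩ) (restrict hM)
  rw [restrict_sup' hΩ hM, restrict_inf' hΩ hM, finrank_restrict', finrank_restrict',
    finrank_restrict', finrank_restrict'] at main
  exact main

lemma keyB (L M : IntermediateField K (AlgebraicClosure K))
    [FiniteDimensional K ↥L] [FiniteDimensional K ↥M]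
    [Algebra.IsSeparable K ↥L] [Algebra.IsSeparable K ↥M]
    (h : Module.finrank K ↥(L ⊔ (M ⊓ normalClosure K ↥L (AlgebraicClosure K))) =
        Module.finrank K ↥L *
          Module.finrank K ↥(M ⊓ normalClosure K ↥L (AlgebraicClosure K))) :
    Module.finrank K ↥(L ⊔ M) = Module.finrank K ↥L * Module.finrank K ↥M := by
  set Ω : IntermediateField K (AlgebraicClosure K) :=
    normalClosure K ↥L (AlgebraicClosure K) with hΩdef
  haveI : FiniteDimensional K ↥Ω := normalClosure.is_finiteDimensional K ↥L _
  haveI : Algebra.IsSeparable K ↥Ω := sep_normalClosure K L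
  have hL : L ≤ Ω := le_normalClosure L
  have A1 := normal_finrank_sup_mul_inf K Ω (L ⊔ M)
  have A2 := normal_finrank_sup_mul_inf K Ω M
  have e1 : Ω ⊔ (L ⊔ M) = Ω ⊔ M := by rw [← sup_assoc, sup_eq_left.mpr hL]
  rw [e1] at A1
  have hle : L ⊔ (M ⊓ Ω) ≤ Ω ⊓ (L ⊔ M) :=
    le_inf (sup_le hL inf_le_right) (sup_le le_sup_left (le_trans inf_le_left le_sup_right))
  have hmono : finrank K ↥(L ⊔ (M ⊓ Ω)) ≤ finrank K ↥(Ω ⊓ (L ⊔ M)) := finrank_mono_IF hle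
  have hub : finrank K ↥(L ⊔ M) ≤ finrank K ↥L * finrank K ↥M :=
    IntermediateField.finrank_sup_le L M
  have einf : finrank K ↥(M ⊓ Ω) = finrank K ↥(Ω ⊓ M) := by rw [inf_comm]
  have hpos : 0 < finrank K ↥Ω * finrank K ↥(Ω ⊓ M) := Nat.mul_pos finrank_pos finrank_pos
  have hlb : finrank K ↥L * finrank K ↥M ≤ finrank K ↥(L ⊔ M) := by
    refine Nat.le_of_mul_le_mul_left ?_ hpos
    calc (finrank K ↥Ω * finrank K ↥(Ω ⊓ M)) * (finrank K ↥L * finrank K ↥M)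
        = (finrank K ↥Ω * finrank K ↥M) * (finrank K ↥L * finrank K ↥(Ω ⊓ M)) := by ring
      _ = (finrank K ↥(Ω ⊔ M) * finrank K ↥(Ω ⊓ M)) *
            (finrank K ↥L * finrank K ↥(Ω ⊓ M)) := by rw [A2]
      _ = (finrank K ↥(Ω ⊔ M) * finrank K ↥(Ω ⊓ M)) * finrank K ↥(L ⊔ (M ⊓ Ω)) := by
            rw [h, einf]
      _ ≤ (finrank K ↥(Ω ⊔ M) * finrank K ↥(Ω ⊓ M)) * finrank K ↥(Ω ⊓ (L ⊔ M)) :=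
            Nat.mul_le_mul_left _ hmono
      _ = (finrank K ↥(Ω ⊓ M)) * (finrank K ↥(Ω ⊔ M) * finrank K ↥(Ω ⊓ (L ⊔ M))) := by ring
      _ = (finrank K ↥(Ω ⊓ M)) * (finrank K ↥Ω * finrank K ↥(L ⊔ M)) := by rw [A1]
      _ = (finrank K ↥Ω * finrank K ↥(Ω ⊓ M)) * finrank K ↥(L ⊔ M) := by ring
  exact le_antisymm hub hlb

end ACAux
section MainAux

variable (K : Type*) [Field K]

lemma linDisjDeg_comm {A B : IntermediateField K (AlgebraicClosure K)}
    (h : LinDisjDeg K A B) : LinDisjDeg K B A := by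
  unfold LinDisjDeg at h ⊢
  rw [sup_comm B A, mul_comm]
  exact h

lemma stepLemma (L M : IntermediateField K (AlgebraicClosure K))
    [FiniteDimensional K ↥L] [FiniteDimensional K ↥M]
    [Algebra.IsSeparable K ↥L] [Algebra.IsSeparable K ↥M]
    (hnd : ¬ LinDisjDeg K L M)
    (h : ∀ M₁, M₁ ≤ M → M₁ ≠ M → LinDisjDeg K L M₁) :
    M ≤ normalClosure K ↥L (AlgebraicClosure K) := by
  by_contra hne
  have hne' : M ⊓ normalClosure K ↥L (AlgebraicClosure K) ≠ M :=
    fun heq => hne (inf_eq_left.mp heq)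
  exact hnd (keyB K L M (h _ inf_le_left hne'))

end MainAux

theorem galois_closures_coincide_of_minimally_reducible
    (K : Type*) [Field K]
    (L M : IntermediateField K (AlgebraicClosure K))
    [FiniteDimensional K ↥L] [FiniteDimensional K ↥M]
    [Algebra.IsSeparable K ↥L] [Algebra.IsSeparable K ↥M]
    (hnd : ¬ LinDisjDeg K L M)
    (hmin : ∀ L₁ M₁ : IntermediateField K (AlgebraicClosure K),
      L₁ ≤ L → M₁ ≤ M → ¬(L₁ = L ∧ M₁ = M) → LinDisjDeg K L₁ M₁) :
    normalClosure K ↥L (AlgebraicClosure K) = normalClosure K ↥M (AlgebraicClosure K) := by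
  have hnd' : ¬ LinDisjDeg K M L := fun hc => hnd (linDisjDeg_comm K hc)
  have h1 : M ≤ normalClosure K ↥L (AlgebraicClosure K) :=
    stepLemma K L M hnd (fun M₁ hM₁ hne => hmin L M₁ le_rfl hM₁ (fun hc => hne hc.2))
  have h2 : L ≤ normalClosure K ↥M (AlgebraicClosure K) :=
    stepLemma K M L hnd'
      (fun L₁ hL₁ hne => linDisjDeg_comm K (hmin L₁ M hL₁ le_rfl (fun hc => hne hc.1)))
  exact le_antisymm (normalClosure_le_iff_of_normal.mpr h2)
    (normalClosure_le_iff_of_normal.mpr h1)
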